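/- If \hat{W} is a b-isotropic n-dimensional subspace of \mathbb{C}^{2n} and V = Span{e_1,...,e_{2n-1}}, then W = \hat{W} \cap V is a b-isotropic subspace of V of dimension n-1, and \hat{W} = W \oplus \mathbb{C}(v + i e_{2n}) for some v in V with b(v,v) = 1 and v b-orthogonal to W. -/

import Mathlib

/-- The standard symmetric bilinear form `b(z,w) = zᵗw` on `ℂ^m`. -/
noncomputable def bf (m : ℕ) (z w : Fin m → ℂ) : ℂ := ∑ j, z j * w j

/-- A subspace is `b`-isotropic if `b` vanishes identically on it. -/
def IsIsotropic (m : ℕ) (W : Submodule ℂ (Fin m → ℂ)) : Prop :=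
  ∀ w ∈ W, ∀ w' ∈ W, bf m w w' = 0

lemma bf_single_right (m : ℕ) (z : Fin m → ℂ) (i : Fin m) :
    bf m z (Pi.single i 1) = z i := by
  simp [bf, Pi.single_apply, mul_ite, Finset.sum_ite_eq']

lemma bf_single_left (m : ℕ) (w : Fin m → ℂ) (i : Fin m) :
    bf m (Pi.single i 1) w = w i := by
  simp [bf, Pi.single_apply, ite_mul, Finset.sum_ite_eq]

lemma bf_add_left (m : ℕ) (z z' w : Fin m → ℂ) :
    bf m (z + z') w = bf m z w + bf m z' w := by
  simp [bf, add_mul, Finset.sum_add_distrib]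

lemma bf_add_right (m : ℕ) (z w w' : Fin m → ℂ) :
    bf m z (w + w') = bf m z w + bf m z w' := by
  simp [bf, mul_add, Finset.sum_add_distrib]

lemma bf_smul_left (m : ℕ) (c : ℂ) (z w : Fin m → ℂ) :
    bf m (c • z) w = c * bf m z w := by
  simp [bf, Finset.mul_sum, mul_assoc]

lemma bf_smul_right (m : ℕ) (c : ℂ) (z w : Fin m → ℂ) :
    bf m z (c • w) = c * bf m z w := by
  simp only [bf, Pi.smul_apply, smul_eq_mul, Finset.mul_sum]
  exact Finset.sum_congr rfl fun i _ => by ring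

lemma bf_sub_left (m : ℕ) (z z' w : Fin m → ℂ) :
    bf m (z - z') w = bf m z w - bf m z' w := by
  simp [bf, sub_mul, Finset.sum_sub_distrib]

lemma bf_sub_right (m : ℕ) (z w w' : Fin m → ℂ) :
    bf m z (w - w') = bf m z w - bf m z w' := by
  simp [bf, mul_sub, Finset.sum_sub_distrib]

lemma bf_toDual (m : ℕ) (z w : Fin m → ℂ) :
    (Pi.basisFun ℂ (Fin m)).toDual z w = bf m z w := by
  rw [LinearMap.pi_apply_eq_sum_univ ((Pi.basisFun ℂ (Fin m)).toDual z) w]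
  unfold bf
  refine Finset.sum_congr rfl fun i _ => ?_
  have h1 : (fun j => if i = j then (1:ℂ) else 0) = Pi.basisFun ℂ (Fin m) i := by
    ext j; simp [Pi.single_apply, eq_comm]
  rw [h1, Module.Basis.toDual_eq_repr, Pi.basisFun_repr]
  simp [mul_comm]

/-- Key lemma: an isotropic `n`-dimensional subspace of `ℂ^{2n}` cannot be contained
in the hyperplane of vectors with vanishing last coordinate. -/
lemma key (n : ℕ) (hn : 0 < n) (Wh : Submodule ℂ (Fin (2 * n) → ℂ))
    (hWh : IsIsotropic (2 * n) Wh) (hd : Module.finrank ℂ Wh = n)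
    (hle : ∀ z ∈ Wh, z (⟨2 * n - 1, Nat.sub_lt (Nat.mul_pos Nat.two_pos hn) Nat.one_pos⟩ : Fin (2 * n)) = 0) : False := by
  set last : Fin (2 * n) := ⟨2 * n - 1, Nat.sub_lt (Nat.mul_pos Nat.two_pos hn) Nat.one_pos⟩ with hlast
  set e : Fin (2 * n) → ℂ := Pi.single last 1 with he
  have helast : e last = 1 := by simp [he]
  have he0 : e ≠ 0 := by
    intro h
    rw [h] at helast; simp at helast
  have heW : e ∉ Wh := fun h => by simpa [helast] using hle e h
  have hinf : Wh ⊓ Submodule.span ℂ {e} = ⊥ := by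
    rw [Submodule.eq_bot_iff]
    rintro x ⟨hx, hxs⟩
    obtain ⟨c, rfl⟩ := Submodule.mem_span_singleton.1 hxs
    rcases eq_or_ne c 0 with rfl | hc
    · simp
    · exfalso
      apply heW
      have := Wh.smul_mem c⁻¹ hx
      rwa [smul_smul, inv_mul_cancel₀ hc, one_smul] at this
  set Wh' : Submodule ℂ (Fin (2 * n) → ℂ) := Wh ⊔ Submodule.span ℂ {e} with hWh'
  have hdim' : Module.finrank ℂ Wh' = n + 1 := by
    have h := Submodule.finrank_sup_add_finrank_inf_eq Wh (Submodule.span ℂ {e})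
    rw [hinf, hd, finrank_span_singleton he0] at h
    simpa using h
  -- the duality map
  set Φ := (Pi.basisFun ℂ (Fin (2 * n))).toDualEquiv with hΦ
  set D : Submodule ℂ (Fin (2 * n) → ℂ) := Submodule.map Φ.symm.toLinearMap Wh'.dualAnnihilator with hD
  have hDdim : Module.finrank ℂ D = n - 1 := by
    have h1 : Module.finrank ℂ D = Module.finrank ℂ Wh'.dualAnnihilator :=
      LinearEquiv.finrank_map_eq Φ.symm _
    have h2 : Module.finrank ℂ Wh'.dualAnnihilator
        = Module.finrank ℂ ((Fin (2 * n) → ℂ) ⧸ Wh') :=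
      ((Subspace.quotEquivAnnihilator Wh').finrank_eq).symm
    have h3 := Wh'.finrank_quotient_add_finrank
    rw [hdim'] at h3
    have h4 : Module.finrank ℂ (Fin (2 * n) → ℂ) = 2 * n := by
      simp [Module.finrank_pi]
    rw [h4] at h3
    omega
  have hWD : Wh ≤ D := by
    intro z hz
    refine ⟨Φ z, ?_, by simp⟩
    show Φ z ∈ Wh'.dualAnnihilator
    rw [Submodule.mem_dualAnnihilator]
    intro w hw
    rw [hWh'] at hw
    rw [Submodule.mem_sup] at hw
    obtain ⟨a, ha, s, hs, rfl⟩ := hw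
    obtain ⟨c, rfl⟩ := Submodule.mem_span_singleton.1 hs
    rw [hΦ]
    rw [Module.Basis.toDualEquiv_apply]
    show (Pi.basisFun ℂ (Fin (2 * n))).toDual z (a + c • e) = 0
    rw [bf_toDual, bf_add_right, bf_smul_right, bf_single_right,
      hWh z hz a ha, hle z hz]
    ring
  have := Submodule.finrank_mono hWD
  rw [hd, hDdim] at this
  omega

/-- If `Ŵ` is a `b`-isotropic `n`-dimensional subspace of `ℂ^{2n}` and
`V = Span{e₁, …, e_{2n-1}}` (the kernel of the last coordinate), then `W = Ŵ ∩ V` is a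
`b`-isotropic subspace of `V` of dimension `n-1`, and `Ŵ = W ⊕ ℂ(v + i e_{2n})` for some
`v ∈ V` with `b(v,v) = 1` and `v` `b`-orthogonal to `W`. -/
theorem stmt11 (n : ℕ) (hn : 0 < n) (Wh : Submodule ℂ (Fin (2 * n) → ℂ))
    (hWh : IsIsotropic (2 * n) Wh) (hd : Module.finrank ℂ Wh = n)
    (V : Submodule ℂ (Fin (2 * n) → ℂ))
    (hV : V = LinearMap.ker (LinearMap.proj (⟨2 * n - 1, by omega⟩ : Fin (2 * n)) :
      (Fin (2 * n) → ℂ) →ₗ[ℂ] ℂ)) :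
    IsIsotropic (2 * n) (Wh ⊓ V) ∧
    Module.finrank ℂ (Wh ⊓ V : Submodule ℂ (Fin (2 * n) → ℂ)) = n - 1 ∧
    ∃ v ∈ V, bf (2 * n) v v = 1 ∧ (∀ w ∈ Wh ⊓ V, bf (2 * n) v w = 0) ∧
      Wh = (Wh ⊓ V) ⊔
        Submodule.span ℂ {v + Complex.I • (Pi.single (⟨2 * n - 1, by omega⟩ : Fin (2 * n)) 1 : Fin (2 * n) → ℂ)} ∧
      (Wh ⊓ V) ⊓
        Submodule.span ℂ {v + Complex.I • (Pi.single (⟨2 * n - 1, by omega⟩ : Fin (2 * n)) 1 : Fin (2 * n) → ℂ)} = ⊥ := by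
  have hlast : (2 * n - 1 : ℕ) < 2 * n := by omega
  set last : Fin (2 * n) := ⟨2 * n - 1, hlast⟩ with hlastdef
  have hVmem : ∀ x : Fin (2 * n) → ℂ, x ∈ V ↔ x last = 0 := by
    intro x
    rw [hV, LinearMap.mem_ker, LinearMap.proj_apply]
  -- isotropy of the intersection
  have hiso : IsIsotropic (2 * n) (Wh ⊓ V) := by
    intro w hw w' hw'
    exact hWh w hw.1 w' hw'.1
  -- there is an element of Wh with nonzero last coordinate
  have hexists : ∃ z ∈ Wh, z last ≠ 0 := by
    by_contra h
    push_neg at h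
    exact key n hn Wh hWh hd h
  obtain ⟨u₀, hu₀W, hu₀⟩ := hexists
  set e : Fin (2 * n) → ℂ := Pi.single last 1 with he
  have helast : e last = 1 := by simp [he]
  set u : Fin (2 * n) → ℂ := (Complex.I * (u₀ last)⁻¹) • u₀ with hu
  have huW : u ∈ Wh := Wh.smul_mem _ hu₀W
  have hulast : u last = Complex.I := by
    rw [hu]
    simp [mul_assoc, inv_mul_cancel₀ hu₀]
  clear_value u
  set v : Fin (2 * n) → ℂ := u - Complex.I • e with hv
  have hvV : v ∈ V := by
    rw [hVmem, hv]
    simp [hulast, helast]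
  have hvu : v + Complex.I • e = u := by rw [hv]; abel
  clear_value v
  have hbue : bf (2 * n) u e = Complex.I := by rw [bf_single_right, hulast]
  have hbeu : bf (2 * n) e u = Complex.I := by rw [bf_single_left, hulast]
  have hbee : bf (2 * n) e e = 1 := by rw [bf_single_right, helast]
  have hbuu : bf (2 * n) u u = 0 := hWh u huW u huW
  have hbvv : bf (2 * n) v v = 1 := by
    rw [hv, bf_sub_left, bf_sub_right, bf_sub_right, bf_smul_left, bf_smul_right,
      bf_smul_left, bf_smul_right, hbuu, hbue, hbeu, hbee]
    simp [Complex.I_mul_I]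
  have horth : ∀ w ∈ Wh ⊓ V, bf (2 * n) v w = 0 := by
    rintro w ⟨hwW, hwV⟩
    have hew : bf (2 * n) e w = 0 := by
      rw [bf_single_left]
      exact (hVmem w).mp hwV
    rw [hv, bf_sub_left, bf_smul_left, hWh u huW w hwW, hew]
    ring
  -- the span of u
  have hspan_mem : u ∈ Submodule.span ℂ {v + Complex.I • e} := by
    rw [hvu]; exact Submodule.mem_span_singleton_self u
  have hsup : Wh = (Wh ⊓ V) ⊔ Submodule.span ℂ {v + Complex.I • e} := by
    apply le_antisymm
    · intro x hx
      have hy : x - (x last * Complex.I⁻¹) • u ∈ Wh ⊓ V := by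
        constructor
        · exact Wh.sub_mem hx (Wh.smul_mem _ huW)
        · refine (hVmem _).mpr ?_
          simp only [Pi.sub_apply, Pi.smul_apply, smul_eq_mul, hulast]
          rw [mul_assoc, inv_mul_cancel₀ Complex.I_ne_zero]
          ring
      have : x = (x - (x last * Complex.I⁻¹) • u) + (x last * Complex.I⁻¹) • u := by
        abel
      rw [this]
      exact Submodule.add_mem _ (Submodule.mem_sup_left hy)
        (Submodule.mem_sup_right (Submodule.smul_mem _ _ hspan_mem))
    · apply sup_le inf_le_left
      rw [Submodule.span_le, Set.singleton_subset_iff, hvu]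
      exact huW
  have hinf : (Wh ⊓ V) ⊓ Submodule.span ℂ {v + Complex.I • e} = ⊥ := by
    rw [Submodule.eq_bot_iff]
    rintro x ⟨⟨hxW, hxV⟩, hxs⟩
    obtain ⟨c, hc⟩ := Submodule.mem_span_singleton.1 hxs
    rw [hvu] at hc
    subst hc
    have : c * Complex.I = 0 := by
      have := (hVmem _).mp hxV
      simpa [hulast] using this
    have hc : c = 0 := by
      rcases mul_eq_zero.mp this with h | h
      · exact h
      · exact absurd h Complex.I_ne_zero
    rw [hc, zero_smul]
  -- dimension count
  have hdim : Module.finrank ℂ (Wh ⊓ V : Submodule ℂ (Fin (2 * n) → ℂ)) = n - 1 := by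
    have h := Submodule.finrank_sup_add_finrank_inf_eq (Wh ⊓ V)
      (Submodule.span ℂ {v + Complex.I • e})
    rw [hinf, ← hsup] at h
    have hu0 : v + Complex.I • e ≠ 0 := by
      rw [hvu]
      intro h0
      apply Complex.I_ne_zero
      rw [← hulast, h0]
      simp
    rw [finrank_span_singleton hu0, hd, finrank_bot] at h
    omega
  exact ⟨hiso, hdim, v, hvV, hbvv, horth, hsup, hinf⟩
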